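/- Let (W, S) be the Weyl group of a Kac-Moody root system acting on the real vector space 𝔸, with real coroots Φ∨ and simple coroots (αₛ∨). Suppose w ∈ W satisfies w·λ − λ ∈ ℝ·αₛ∨ for all λ in a W-invariant lattice Y spanning 𝔸, for some fixed s ∈ S. Then w = 1 or w = s. -/

import Mathlib

/-- The data of a Kac–Moody root generating system realized on a real vector space `𝔸`:
a generalized Cartan matrix `A`, simple roots `root i` (linear forms on `𝔸`), simple coroots
`coroot i ∈ 𝔸`, forming free families, with pairing `⟨αⱼ, αᵢ∨⟩ = A i j`, and the simple
reflections `refl i : v ↦ v - αᵢ(v) αᵢ∨`. -/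
structure KMData (I : Type*) (𝔸 : Type*) [Fintype I] [AddCommGroup 𝔸] [Module ℝ 𝔸] where
  A : Matrix I I ℤ
  root : I → (𝔸 →ₗ[ℝ] ℝ)
  coroot : I → 𝔸
  pairing : ∀ i j, root j (coroot i) = A i j
  diag : ∀ i, A i i = 2
  offDiag : ∀ i j, i ≠ j → A i j ≤ 0
  symmZero : ∀ i j, A i j = 0 ↔ A j i = 0
  rootInd : LinearIndependent ℝ root
  corootInd : LinearIndependent ℝ coroot
  refl : I → (𝔸 ≃ₗ[ℝ] 𝔸)
  refl_apply : ∀ i v, refl i v = v - root i v • coroot i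

variable {I 𝔸 : Type*} [Fintype I] [AddCommGroup 𝔸] [Module ℝ 𝔸]

/-- The Weyl group: the subgroup of linear automorphisms of `𝔸` generated by the simple
reflections. -/
def KMData.weylGroup (D : KMData I 𝔸) : Subgroup (𝔸 ≃ₗ[ℝ] 𝔸) :=
  Subgroup.closure (Set.range D.refl)

/-- The Tits cone: the union of the `W`-translates of the closed fundamental chamber. -/
def KMData.titsCone (D : KMData I 𝔸) : Set 𝔸 :=
  {x | ∃ g ∈ D.weylGroup, ∃ y : 𝔸, (∀ i, 0 ≤ D.root i y) ∧ x = g y}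

set_option linter.unusedSectionVars false
set_option linter.unusedVariables false
set_option linter.unnecessarySeqFocus false

namespace KMProof

variable (D : KMData I 𝔸)

lemma mul_app (f g : 𝔸 ≃ₗ[ℝ] 𝔸) (v : 𝔸) : (f * g) v = f (g v) := rfl

lemma one_app (v : 𝔸) : (1 : 𝔸 ≃ₗ[ℝ] 𝔸) v = v := rfl

lemma pairing_cast (i j : I) : D.root j (D.coroot i) = ((D.A i j : ℤ) : ℝ) := D.pairing i j

lemma root_coroot_self (j : I) : D.root j (D.coroot j) = 2 := by
  rw [pairing_cast, D.diag]; norm_num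

lemma refl_mul_refl (j : I) : D.refl j * D.refl j = 1 := by
  apply LinearEquiv.ext; intro v
  rw [mul_app, one_app, D.refl_apply, D.refl_apply]
  simp only [map_sub, map_smul, root_coroot_self, smul_eq_mul]
  match_scalars <;> ring

lemma refl_inv (j : I) : (D.refl j)⁻¹ = D.refl j :=
  inv_eq_of_mul_eq_one_right (refl_mul_refl D j)

lemma refl_mem (j : I) : D.refl j ∈ D.weylGroup :=
  Subgroup.subset_closure ⟨j, rfl⟩

/-- product of simple reflections along a word -/
def word (l : List I) : 𝔸 ≃ₗ[ℝ] 𝔸 := (l.map D.refl).prod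

@[simp] lemma word_nil : word D ([] : List I) = 1 := rfl

@[simp] lemma word_cons (a : I) (l : List I) : word D (a :: l) = D.refl a * word D l := by
  simp [word]

lemma word_append (l₁ l₂ : List I) : word D (l₁ ++ l₂) = word D l₁ * word D l₂ := by
  simp [word]

lemma word_concat (l : List I) (a : I) : word D (l ++ [a]) = word D l * D.refl a := by
  simp [word_append]

lemma word_mem (l : List I) : word D l ∈ D.weylGroup := by
  induction l with
  | nil => exact one_mem _
  | cons a l ih => rw [word_cons]; exact mul_mem (refl_mem D a) ih

lemma word_reverse (l : List I) : word D l.reverse = (word D l)⁻¹ := by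
  induction l with
  | nil => simp
  | cons a l ih =>
      rw [List.reverse_cons, word_concat, ih, word_cons, mul_inv_rev, refl_inv]

lemma mem_iff_word (g : 𝔸 ≃ₗ[ℝ] 𝔸) : g ∈ D.weylGroup ↔ ∃ l : List I, word D l = g := by
  constructor
  · intro hg
    induction hg using Subgroup.closure_induction with
    | mem x hx => obtain ⟨j, rfl⟩ := hx; exact ⟨[j], by simp⟩
    | one => exact ⟨[], rfl⟩
    | mul x y _ _ hx hy =>
        obtain ⟨lx, rfl⟩ := hx; obtain ⟨ly, rfl⟩ := hy
        exact ⟨lx ++ ly, word_append D lx ly⟩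
    | inv x _ hx =>
        obtain ⟨lx, rfl⟩ := hx
        exact ⟨lx.reverse, word_reverse D lx⟩
  · rintro ⟨l, rfl⟩; exact word_mem D l

/-- minimal length of a word over the alphabet `P` representing `g` -/
noncomputable def plen (P : I → Prop) (g : 𝔸 ≃ₗ[ℝ] 𝔸) : ℕ :=
  sInf {n | ∃ l : List I, (∀ a ∈ l, P a) ∧ l.length = n ∧ word D l = g}

lemma plen_le {P : I → Prop} {l : List I} {g : 𝔸 ≃ₗ[ℝ] 𝔸}
    (hl : ∀ a ∈ l, P a) (hg : word D l = g) : plen D P g ≤ l.length :=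
  Nat.sInf_le ⟨l, hl, rfl, hg⟩

lemma exists_reduced {P : I → Prop} {g : 𝔸 ≃ₗ[ℝ] 𝔸}
    (hg : ∃ l : List I, (∀ a ∈ l, P a) ∧ word D l = g) :
    ∃ l : List I, (∀ a ∈ l, P a) ∧ word D l = g ∧ l.length = plen D P g := by
  obtain ⟨l0, h1, h2⟩ := hg
  have hne : {n | ∃ l : List I, (∀ a ∈ l, P a) ∧ l.length = n ∧ word D l = g}.Nonempty :=
    ⟨l0.length, l0, h1, rfl, h2⟩
  obtain ⟨l, hl, hlen, hw⟩ := Nat.sInf_mem hne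
  exact ⟨l, hl, hw, hlen⟩

/-- length with the full alphabet -/
noncomputable def flen (g : 𝔸 ≃ₗ[ℝ] 𝔸) : ℕ := plen D (fun _ => True) g

lemma exists_freduced {g : 𝔸 ≃ₗ[ℝ] 𝔸} (hg : g ∈ D.weylGroup) :
    ∃ l : List I, word D l = g ∧ l.length = flen D g := by
  obtain ⟨l, _, h2, h3⟩ := exists_reduced D (P := fun _ => True)
    (by obtain ⟨l, hl⟩ := (mem_iff_word D g).1 hg; exact ⟨l, fun _ _ => trivial, hl⟩)
  exact ⟨l, h2, h3⟩

lemma flen_le {l : List I} {g : 𝔸 ≃ₗ[ℝ] 𝔸} (hg : word D l = g) : flen D g ≤ l.length :=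
  plen_le D (fun _ _ => trivial) hg

lemma eq_one_of_flen_zero {g : 𝔸 ≃ₗ[ℝ] 𝔸} (hg : g ∈ D.weylGroup) (h : flen D g = 0) :
    g = 1 := by
  obtain ⟨l, hw, hlen⟩ := exists_freduced D hg
  rw [h, List.length_eq_zero_iff] at hlen
  rw [hlen] at hw; simpa using hw.symm

lemma flen_mul_word_le {g : 𝔸 ≃ₗ[ℝ] 𝔸} (hg : g ∈ D.weylGroup) (c : List I) :
    flen D (g * word D c) ≤ flen D g + c.length := by
  obtain ⟨l, hw, hlen⟩ := exists_freduced D hg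
  have : word D (l ++ c) = g * word D c := by rw [word_append, hw]
  simpa [hlen] using flen_le D this

lemma flen_le_flen_mul_refl_add_one {w : 𝔸 ≃ₗ[ℝ] 𝔸} (hw : w ∈ D.weylGroup) (j : I) :
    flen D w ≤ flen D (w * D.refl j) + 1 := by
  have h1 : (w * D.refl j) * word D [j] = w := by
    simp [mul_assoc, refl_mul_refl]
  have := flen_mul_word_le D (mul_mem hw (refl_mem D j)) [j]
  rw [h1] at this
  simpa using this

end KMProof
namespace KMProof

variable (D : KMData I 𝔸)

/-- strip letters `j,k` from the right while the length decreases -/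
lemma chain (j k : I) : ∀ n (w : 𝔸 ≃ₗ[ℝ] 𝔸), w ∈ D.weylGroup → flen D w = n →
    ∃ v c, v ∈ D.weylGroup ∧ (∀ a ∈ c, a = j ∨ a = k) ∧ w = v * word D c ∧
      flen D w = flen D v + c.length ∧ flen D v ≤ flen D (v * D.refl j) ∧
      flen D v ≤ flen D (v * D.refl k) := by
  intro n
  induction n using Nat.strong_induction_on with
  | _ n ih =>
    intro w hw hn
    by_cases hj : flen D (w * D.refl j) < flen D w
    · have hwj : w * D.refl j ∈ D.weylGroup := mul_mem hw (refl_mem D j)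
      obtain ⟨v, c, hv, hc, heq, hlen, h1, h2⟩ :=
        ih (flen D (w * D.refl j)) (by omega) (w * D.refl j) hwj rfl
      refine ⟨v, c ++ [j], hv, ?_, ?_, ?_, h1, h2⟩
      · intro a ha; rcases List.mem_append.1 ha with ha | ha
        · exact hc a ha
        · simp at ha; exact Or.inl ha
      · rw [word_concat, ← mul_assoc, ← heq]
        simp [mul_assoc, refl_mul_refl]
      · have hub := flen_le_flen_mul_refl_add_one D hw j
        simp only [List.length_append, List.length_cons, List.length_nil]
        omega
    · by_cases hk : flen D (w * D.refl k) < flen D w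
      · have hwk : w * D.refl k ∈ D.weylGroup := mul_mem hw (refl_mem D k)
        obtain ⟨v, c, hv, hc, heq, hlen, h1, h2⟩ :=
          ih (flen D (w * D.refl k)) (by omega) (w * D.refl k) hwk rfl
        refine ⟨v, c ++ [k], hv, ?_, ?_, ?_, h1, h2⟩
        · intro a ha; rcases List.mem_append.1 ha with ha | ha
          · exact hc a ha
          · simp at ha; exact Or.inr ha
        · rw [word_concat, ← mul_assoc, ← heq]
          simp [mul_assoc, refl_mul_refl]
        · have hub := flen_le_flen_mul_refl_add_one D hw k
          simp only [List.length_append, List.length_cons, List.length_nil]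
          omega
      · exact ⟨w, [], hw, by simp, by simp, by simp, by omega, by omega⟩


section Dihedral

variable (s t : I)

open Classical in
noncomputable def oth (x : I) : I := if x = s then t else s

lemma oth_mem (x : I) : oth s t x = s ∨ oth s t x = t := by
  unfold oth; split <;> simp

lemma oth_s : oth s t s = t := by simp [oth]

lemma oth_t (hst : s ≠ t) : oth s t t = s := by simp [oth, hst.symm]

lemma oth_oth (hst : s ≠ t) {x : I} (hx : x = s ∨ x = t) : oth s t (oth s t x) = x := by
  rcases hx with rfl | rfl
  · rw [oth_s, oth_t _ _ hst]
  · rw [oth_t _ _ hst, oth_s]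

noncomputable def altFrom : ℕ → I → List I
  | 0, _ => []
  | (m+1), x => x :: altFrom m (oth s t x)

@[simp] lemma altFrom_zero (x : I) : altFrom s t 0 x = [] := rfl

@[simp] lemma altFrom_succ (m : ℕ) (x : I) :
    altFrom s t (m+1) x = x :: altFrom s t m (oth s t x) := rfl

@[simp] lemma length_altFrom (m : ℕ) (x : I) : (altFrom s t m x).length = m := by
  induction m generalizing x with
  | zero => rfl
  | succ m ih => simp [ih]

lemma altFrom_mem {x : I} (hx : x = s ∨ x = t) (m : ℕ) :
    ∀ a ∈ altFrom s t m x, a = s ∨ a = t := by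
  induction m generalizing x with
  | zero => simp
  | succ m ih =>
      intro a ha
      rw [altFrom_succ] at ha
      rcases List.mem_cons.1 ha with rfl | ha
      · exact hx
      · exact ih (oth_mem s t x) a ha

lemma altFrom_concat (hst : s ≠ t) (m : ℕ) {x : I} (hx : x = s ∨ x = t) :
    altFrom s t (m+1) x = altFrom s t m x ++ [if m % 2 = 0 then x else oth s t x] := by
  induction m generalizing x with
  | zero => simp
  | succ m ih =>
      rw [altFrom_succ, ih (oth_mem s t x), altFrom_succ]
      rw [oth_oth s t hst hx]
      rcases Nat.even_or_odd m with he | ho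
      · have h0 : m % 2 = 0 := Nat.even_iff.1 he
        have h1 : (m+1) % 2 = 1 := by omega
        simp [h0, h1]
      · have h0 : m % 2 = 1 := Nat.odd_iff.1 ho
        have h1 : (m+1) % 2 = 0 := by omega
        simp [h0, h1]

lemma altFrom_add (hst : s ≠ t) (a b : ℕ) {x : I} (hx : x = s ∨ x = t) :
    altFrom s t (a+b) x =
      altFrom s t a x ++ altFrom s t b (if a % 2 = 0 then x else oth s t x) := by
  induction a generalizing x with
  | zero => simp
  | succ a ih =>
      rw [Nat.add_right_comm a 1 b, altFrom_succ, ih (oth_mem s t x)]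
      rcases Nat.even_or_odd a with he | ho
      · have h0 : a % 2 = 0 := Nat.even_iff.1 he
        have h1 : (a+1) % 2 = 1 := by omega
        simp [h0, h1]
      · have h0 : a % 2 = 1 := Nat.odd_iff.1 ho
        have h1 : (a+1) % 2 = 0 := by omega
        simp [h0, h1, oth_oth s t hst hx]

/-- canonical form in the dihedral subgroup -/
lemma canonical (hst : s ≠ t) : ∀ l : List I, (∀ a ∈ l, a = s ∨ a = t) →
    ∃ m x, m ≤ l.length ∧ (x = s ∨ x = t) ∧ word D l = word D (altFrom s t m x) := by
  intro l
  induction l with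
  | nil => intro _; exact ⟨0, s, by simp, Or.inl rfl, by simp⟩
  | cons a l ih =>
      intro hal
      obtain ⟨m, x, hm, hx, hwl⟩ := ih (fun b hb => hal b (List.mem_cons_of_mem a hb))
      have ha : a = s ∨ a = t := hal a List.mem_cons_self
      rcases m with _ | m'
      · refine ⟨1, a, by simp only [List.length_cons]; omega, ha, ?_⟩
        rw [word_cons, hwl]
        simp
      · by_cases hax : a = x
        · refine ⟨m', oth s t x, by simp only [List.length_cons]; omega,
            oth_mem s t x, ?_⟩
          rw [word_cons, hwl, altFrom_succ, word_cons, ← mul_assoc, hax,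
            refl_mul_refl, one_mul]
        · have hao : a = oth s t x := by
            rcases hx with rfl | rfl
            · rw [oth_s]
              rcases ha with rfl | rfl
              · exact absurd rfl hax
              · rfl
            · rw [oth_t _ _ hst]
              rcases ha with rfl | rfl
              · rfl
              · exact absurd rfl hax
          refine ⟨m' + 2, a, by simp only [List.length_cons]; omega, ha, ?_⟩
          rw [word_cons, hwl]
          have h2 : altFrom s t (m' + 2) a = a :: altFrom s t (m'+1) (oth s t a) := rfl
          rw [h2, word_cons]
          congr 2
          rw [hao, oth_oth s t hst hx]


lemma reduce_braid (hst : s ≠ t) {h : ℕ} (hh : 1 ≤ h)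
    (hbraid : word D (altFrom s t h s) = word D (altFrom s t h t))
    {x : I} (hx : x = s ∨ x = t) :
    word D (altFrom s t (h+1) x) = word D (altFrom s t (h-1) (oth s t x)) := by
  obtain ⟨h', rfl⟩ : ∃ h', h = h' + 1 := ⟨h - 1, by omega⟩
  have hb : word D (altFrom s t (h'+1) (oth s t x)) = word D (altFrom s t (h'+1) x) := by
    rcases hx with rfl | rfl
    · rw [oth_s]; exact hbraid.symm
    · rw [oth_t _ _ hst]; exact hbraid
  rw [altFrom_succ, word_cons, hb, altFrom_succ, word_cons, ← mul_assoc, refl_mul_refl,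
    one_mul]
  simp

lemma canonical_bounded (hst : s ≠ t) {h : ℕ} (hh : 1 ≤ h)
    (hbraid : word D (altFrom s t h s) = word D (altFrom s t h t)) :
    ∀ n (l : List I), l.length ≤ n → (∀ a ∈ l, a = s ∨ a = t) →
    ∃ m x, m ≤ l.length ∧ m ≤ h ∧ (x = s ∨ x = t) ∧ word D l = word D (altFrom s t m x) := by
  intro n
  induction n with
  | zero =>
      intro l hl hal
      obtain ⟨m, x, hm, hx, hw⟩ := canonical D s t hst l hal
      exact ⟨m, x, hm, by omega, hx, hw⟩
  | succ n ihn =>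
      intro l hl hal
      obtain ⟨m, x, hm, hx, hw⟩ := canonical D s t hst l hal
      by_cases hmh : m ≤ h
      · exact ⟨m, x, hm, hmh, hx, hw⟩
      · -- m ≥ h + 1 : reduce using the braid relation and recurse
        have hm1 : m = (h + 1) + (m - h - 1) := by omega
        set b := m - h - 1 with hb
        set y : I := if (h+1) % 2 = 0 then x else oth s t x with hy
        have hymem : y = s ∨ y = t := by
          rw [hy]; split
          · exact hx
          · exact oth_mem s t x
        have hsplit : altFrom s t m x = altFrom s t (h+1) x ++ altFrom s t b y := by
          rw [hm1]; exact altFrom_add s t hst (h+1) b hx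
        set l' : List I := altFrom s t (h-1) (oth s t x) ++ altFrom s t b y with hl'
        have hl'mem : ∀ a ∈ l', a = s ∨ a = t := by
          intro a ha
          rcases List.mem_append.1 ha with ha | ha
          · exact altFrom_mem s t (oth_mem s t x) _ a ha
          · exact altFrom_mem s t hymem _ a ha
        have hl'len : l'.length = (h-1) + b := by simp [hl']
        have hwl' : word D l = word D l' := by
          rw [hw, hsplit, word_append, word_append,
            reduce_braid D s t hst hh hbraid hx]
        have hlen2 : l'.length ≤ n := by
          have : m ≤ l.length := hm
          omega
        obtain ⟨m'', x'', hm'', hmh'', hx'', hw''⟩ := ihn l' hlen2 hl'mem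
        refine ⟨m'', x'', ?_, hmh'', hx'', by rw [hwl', hw'']⟩
        omega

/-- the coefficient sequence of the orbit of `coroot s` under the alternating words -/
noncomputable def pq (B C : ℝ) : ℕ → ℝ × ℝ
  | 0 => (1, 0)
  | (m+1) =>
      let z := pq B C m
      if m % 2 = 0 then (z.1, B * z.1 - z.2) else (C * z.2 - z.1, z.2)

lemma pq_zero (B C : ℝ) : pq B C 0 = (1, 0) := rfl

lemma pq_succ (B C : ℝ) (m : ℕ) : pq B C (m+1) =
    if m % 2 = 0 then ((pq B C m).1, B * (pq B C m).1 - (pq B C m).2)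
    else (C * (pq B C m).2 - (pq B C m).1, (pq B C m).2) := rfl

/-- the alternating word of length `m` whose rightmost letter is `t` -/
noncomputable def Am (m : ℕ) : List I := altFrom s t m (if m % 2 = 1 then t else s)

lemma Am_succ (hst : s ≠ t) (m : ℕ) :
    Am s t (m+1) = (if m % 2 = 0 then t else s) :: Am s t m := by
  unfold Am
  rcases Nat.even_or_odd m with he | ho
  · have h0 : m % 2 = 0 := Nat.even_iff.1 he
    have h1 : (m+1) % 2 = 1 := by omega
    rw [h0, h1]
    norm_num [altFrom_succ, oth_t s t hst]
  · have h0 : m % 2 = 1 := Nat.odd_iff.1 ho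
    have h1 : (m+1) % 2 = 0 := by omega
    rw [h0, h1]
    norm_num [altFrom_succ, oth_s s t]

lemma Y_coords (hst : s ≠ t) : ∀ m : ℕ,
    word D (Am s t m) (D.coroot s) =
      (pq (-((D.A s t : ℤ) : ℝ)) (-((D.A t s : ℤ) : ℝ)) m).1 • D.coroot s +
      (pq (-((D.A s t : ℤ) : ℝ)) (-((D.A t s : ℤ) : ℝ)) m).2 • D.coroot t := by
  set B : ℝ := -((D.A s t : ℤ) : ℝ) with hB
  set C : ℝ := -((D.A t s : ℤ) : ℝ) with hC
  intro m
  induction m with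
  | zero =>
      simp [Am, pq_zero]
  | succ m ih =>
      rw [Am_succ s t hst m, word_cons, mul_app, ih, pq_succ]
      rcases Nat.even_or_odd m with he | ho
      · have h0 : m % 2 = 0 := Nat.even_iff.1 he
        simp only [h0, if_true, reduceIte]
        rw [D.refl_apply]
        simp only [map_add, map_smul, root_coroot_self, pairing_cast, smul_eq_mul]
        match_scalars
        · ring
        · rw [hB]; ring
      · have h0 : m % 2 = 1 := Nat.odd_iff.1 ho
        simp only [h0, one_ne_zero, reduceIte]
        rw [D.refl_apply]
        simp only [map_add, map_smul, root_coroot_self, pairing_cast, smul_eq_mul]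
        match_scalars
        · rw [hC]; ring
        · ring

lemma pq_pos (B C : ℝ) (hB : 0 ≤ B) (hC : 0 ≤ C) (hBC : 4 ≤ B * C) : ∀ m : ℕ,
    0 ≤ (pq B C m).1 ∧ 0 ≤ (pq B C m).2 ∧
    (m % 2 = 0 → 2 * (pq B C m).2 ≤ B * (pq B C m).1) ∧
    (m % 2 = 1 → 2 * (pq B C m).1 ≤ C * (pq B C m).2) := by
  intro m
  induction m with
  | zero =>
      refine ⟨by norm_num [pq_zero], by norm_num [pq_zero], fun _ => ?_,
        fun hcon => by simp at hcon⟩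
      simp only [pq_zero]
      nlinarith
  | succ m ih =>
      obtain ⟨hp, hq, hev, hod⟩ := ih
      rcases Nat.even_or_odd m with he | ho
      · have h0 : m % 2 = 0 := Nat.even_iff.1 he
        have h1 : (m+1) % 2 = 1 := by omega
        have key := hev h0
        have hu : 0 ≤ C * (B * (pq B C m).1 - 2 * (pq B C m).2) :=
          mul_nonneg hC (by linarith)
        have hv : 0 ≤ (B * C - 4) * (pq B C m).1 := mul_nonneg (by linarith) hp
        rw [pq_succ]
        simp only [h0, h1, reduceIte]
        refine ⟨hp, by nlinarith, fun hcon => absurd hcon one_ne_zero, fun _ => by nlinarith⟩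
      · have h0 : m % 2 = 1 := Nat.odd_iff.1 ho
        have h1 : (m+1) % 2 = 0 := by omega
        have key := hod h0
        have hu : 0 ≤ B * (C * (pq B C m).2 - 2 * (pq B C m).1) :=
          mul_nonneg hB (by linarith)
        have hv : 0 ≤ (B * C - 4) * (pq B C m).2 := mul_nonneg (by linarith) hq
        rw [pq_succ]
        simp only [h0, h1, one_ne_zero, reduceIte]
        refine ⟨by nlinarith, hq, fun _ => by nlinarith, fun hcon => absurd hcon.symm one_ne_zero⟩


lemma braid20 (hst : s ≠ t) (ha : D.A s t = 0) (hb : D.A t s = 0) :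
    word D (altFrom s t 2 s) = word D (altFrom s t 2 t) := by
  have es : oth s t s = t := oth_s s t
  have et : oth s t t = s := oth_t s t hst
  have hzst : D.root t (D.coroot s) = (0 : ℝ) := by rw [pairing_cast, ha]; norm_num
  have hzts : D.root s (D.coroot t) = (0 : ℝ) := by rw [pairing_cast, hb]; norm_num
  apply LinearEquiv.ext; intro v
  simp only [show (6:ℕ)=5+1 from rfl, show (5:ℕ)=4+1 from rfl, show (4:ℕ)=3+1 from rfl,
    show (3:ℕ)=2+1 from rfl, show (2:ℕ)=1+1 from rfl,
    altFrom_succ, altFrom_zero, show ∀ x : I, altFrom s t 1 x = [x] from fun _ => rfl, es, et, word_cons, word_nil, mul_one, mul_app,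
    KMData.refl_apply, map_sub, map_smul, smul_eq_mul, hzst, hzts, root_coroot_self]
  match_scalars <;> ring

lemma braid31 (hst : s ≠ t) (ha : D.A s t = -1) (hb : D.A t s = -1) :
    word D (altFrom s t 3 s) = word D (altFrom s t 3 t) := by
  have es : oth s t s = t := oth_s s t
  have et : oth s t t = s := oth_t s t hst
  have hzst : D.root t (D.coroot s) = (-1 : ℝ) := by rw [pairing_cast, ha]; norm_num
  have hzts : D.root s (D.coroot t) = (-1 : ℝ) := by rw [pairing_cast, hb]; norm_num
  apply LinearEquiv.ext; intro v
  simp only [show (6:ℕ)=5+1 from rfl, show (5:ℕ)=4+1 from rfl, show (4:ℕ)=3+1 from rfl,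
    show (3:ℕ)=2+1 from rfl, show (2:ℕ)=1+1 from rfl,
    altFrom_succ, altFrom_zero, show ∀ x : I, altFrom s t 1 x = [x] from fun _ => rfl, es, et, word_cons, word_nil, mul_one, mul_app,
    KMData.refl_apply, map_sub, map_smul, smul_eq_mul, hzst, hzts, root_coroot_self]
  match_scalars <;> ring

lemma braid412 (hst : s ≠ t) (ha : D.A s t = -1) (hb : D.A t s = -2) :
    word D (altFrom s t 4 s) = word D (altFrom s t 4 t) := by
  have es : oth s t s = t := oth_s s t
  have et : oth s t t = s := oth_t s t hst
  have hzst : D.root t (D.coroot s) = (-1 : ℝ) := by rw [pairing_cast, ha]; norm_num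
  have hzts : D.root s (D.coroot t) = (-2 : ℝ) := by rw [pairing_cast, hb]; norm_num
  apply LinearEquiv.ext; intro v
  simp only [show (6:ℕ)=5+1 from rfl, show (5:ℕ)=4+1 from rfl, show (4:ℕ)=3+1 from rfl,
    show (3:ℕ)=2+1 from rfl, show (2:ℕ)=1+1 from rfl,
    altFrom_succ, altFrom_zero, show ∀ x : I, altFrom s t 1 x = [x] from fun _ => rfl, es, et, word_cons, word_nil, mul_one, mul_app,
    KMData.refl_apply, map_sub, map_smul, smul_eq_mul, hzst, hzts, root_coroot_self]
  match_scalars <;> ring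

lemma braid421 (hst : s ≠ t) (ha : D.A s t = -2) (hb : D.A t s = -1) :
    word D (altFrom s t 4 s) = word D (altFrom s t 4 t) := by
  have es : oth s t s = t := oth_s s t
  have et : oth s t t = s := oth_t s t hst
  have hzst : D.root t (D.coroot s) = (-2 : ℝ) := by rw [pairing_cast, ha]; norm_num
  have hzts : D.root s (D.coroot t) = (-1 : ℝ) := by rw [pairing_cast, hb]; norm_num
  apply LinearEquiv.ext; intro v
  simp only [show (6:ℕ)=5+1 from rfl, show (5:ℕ)=4+1 from rfl, show (4:ℕ)=3+1 from rfl,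
    show (3:ℕ)=2+1 from rfl, show (2:ℕ)=1+1 from rfl,
    altFrom_succ, altFrom_zero, show ∀ x : I, altFrom s t 1 x = [x] from fun _ => rfl, es, et, word_cons, word_nil, mul_one, mul_app,
    KMData.refl_apply, map_sub, map_smul, smul_eq_mul, hzst, hzts, root_coroot_self]
  match_scalars <;> ring

lemma braid613 (hst : s ≠ t) (ha : D.A s t = -1) (hb : D.A t s = -3) :
    word D (altFrom s t 6 s) = word D (altFrom s t 6 t) := by
  have es : oth s t s = t := oth_s s t
  have et : oth s t t = s := oth_t s t hst
  have hzst : D.root t (D.coroot s) = (-1 : ℝ) := by rw [pairing_cast, ha]; norm_num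
  have hzts : D.root s (D.coroot t) = (-3 : ℝ) := by rw [pairing_cast, hb]; norm_num
  apply LinearEquiv.ext; intro v
  simp only [show (6:ℕ)=5+1 from rfl, show (5:ℕ)=4+1 from rfl, show (4:ℕ)=3+1 from rfl,
    show (3:ℕ)=2+1 from rfl, show (2:ℕ)=1+1 from rfl,
    altFrom_succ, altFrom_zero, show ∀ x : I, altFrom s t 1 x = [x] from fun _ => rfl, es, et, word_cons, word_nil, mul_one, mul_app,
    KMData.refl_apply, map_sub, map_smul, smul_eq_mul, hzst, hzts, root_coroot_self]
  match_scalars <;> ring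

lemma braid631 (hst : s ≠ t) (ha : D.A s t = -3) (hb : D.A t s = -1) :
    word D (altFrom s t 6 s) = word D (altFrom s t 6 t) := by
  have es : oth s t s = t := oth_s s t
  have et : oth s t t = s := oth_t s t hst
  have hzst : D.root t (D.coroot s) = (-3 : ℝ) := by rw [pairing_cast, ha]; norm_num
  have hzts : D.root s (D.coroot t) = (-1 : ℝ) := by rw [pairing_cast, hb]; norm_num
  apply LinearEquiv.ext; intro v
  simp only [show (6:ℕ)=5+1 from rfl, show (5:ℕ)=4+1 from rfl, show (4:ℕ)=3+1 from rfl,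
    show (3:ℕ)=2+1 from rfl, show (2:ℕ)=1+1 from rfl,
    altFrom_succ, altFrom_zero, show ∀ x : I, altFrom s t 1 x = [x] from fun _ => rfl, es, et, word_cons, word_nil, mul_one, mul_app,
    KMData.refl_apply, map_sub, map_smul, smul_eq_mul, hzst, hzts, root_coroot_self]
  match_scalars <;> ring

/-- a reduced-type word cannot end with the letter `s` -/
lemma noend (hst : s ≠ t) (d : 𝔸 ≃ₗ[ℝ] 𝔸)
    (hds : plen D (fun a => a = s ∨ a = t) d ≤ plen D (fun a => a = s ∨ a = t) (d * D.refl s))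
    (m' : ℕ) (x : I) (hx : x = s ∨ x = t)
    (hcan : d = word D (altFrom s t (m'+1) x))
    (hmin : m' + 1 ≤ plen D (fun a => a = s ∨ a = t) d)
    (hL : (if m' % 2 = 0 then x else oth s t x) = s) : False := by
  have hconc := altFrom_concat s t hst m' hx
  rw [hL] at hconc
  have hds' : d * D.refl s = word D (altFrom s t m' x) := by
    rw [hcan, hconc, word_concat, mul_assoc, refl_mul_refl, mul_one]
  have h2 : plen D (fun a => a = s ∨ a = t) (d * D.refl s) ≤ m' := by
    have := plen_le D (altFrom_mem s t hx m') hds'.symm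
    simpa using this
  omega

lemma dihedral_eval (hst : s ≠ t) (d : 𝔸 ≃ₗ[ℝ] 𝔸)
    (hds : plen D (fun a => a = s ∨ a = t) d ≤ plen D (fun a => a = s ∨ a = t) (d * D.refl s))
    (m : ℕ) (x : I) (hx : x = s ∨ x = t)
    (hcan : d = word D (altFrom s t m x))
    (hmeq : m = plen D (fun a => a = s ∨ a = t) d) :
    d (D.coroot s) =
      (pq (-((D.A s t : ℤ) : ℝ)) (-((D.A t s : ℤ) : ℝ)) m).1 • D.coroot s +
      (pq (-((D.A s t : ℤ) : ℝ)) (-((D.A t s : ℤ) : ℝ)) m).2 • D.coroot t := by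
  rcases m with _ | m'
  · rw [hcan]
    simp [pq_zero, one_app]
  · have hLmem : (if m' % 2 = 0 then x else oth s t x) = s ∨
        (if m' % 2 = 0 then x else oth s t x) = t := by
      split
      · exact hx
      · exact oth_mem s t x
    have hL : (if m' % 2 = 0 then x else oth s t x) = t := by
      rcases hLmem with hLs | hLt
      · exact absurd hLs (fun hLs => noend D s t hst d hds m' x hx hcan (by omega) hLs)
      · exact hLt
    have hxval : x = (if (m'+1) % 2 = 1 then t else s) := by
      rcases Nat.even_or_odd m' with he | ho
      · have h0 : m' % 2 = 0 := Nat.even_iff.1 he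
        have h1 : (m'+1) % 2 = 1 := by omega
        have hxt : x = t := by simpa [h0] using hL
        simp [h1, hxt]
      · have h0 : m' % 2 = 1 := Nat.odd_iff.1 ho
        have h1 : (m'+1) % 2 = 0 := by omega
        have hot : oth s t x = t := by simpa [h0] using hL
        have hxs : x = s := by
          rcases hx with rfl | rfl
          · rfl
          · rw [oth_t _ _ hst] at hot; exact hot.symm
        simp [h1, hxs]
    have hAm : altFrom s t (m'+1) x = Am s t (m'+1) := by
      rw [hxval]; rfl
    rw [hcan, hAm]
    exact Y_coords D s t hst (m'+1)

lemma dihedral_not_top (hst : s ≠ t) (d : 𝔸 ≃ₗ[ℝ] 𝔸)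
    (hds : plen D (fun a => a = s ∨ a = t) d ≤ plen D (fun a => a = s ∨ a = t) (d * D.refl s))
    {h : ℕ} (hh : 1 ≤ h)
    (hbraid : word D (altFrom s t h s) = word D (altFrom s t h t))
    (x : I) (hx : x = s ∨ x = t)
    (hcan : d = word D (altFrom s t h x))
    (hmeq : h ≤ plen D (fun a => a = s ∨ a = t) d) : False := by
  obtain ⟨h', rfl⟩ : ∃ h'', h = h'' + 1 := ⟨h - 1, by omega⟩
  by_cases hL : (if h' % 2 = 0 then x else oth s t x) = s
  · exact noend D s t hst d hds h' x hx hcan hmeq hL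
  · have hLmem : (if h' % 2 = 0 then x else oth s t x) = s ∨
        (if h' % 2 = 0 then x else oth s t x) = t := by
      split
      · exact hx
      · exact oth_mem s t x
    have hLt : (if h' % 2 = 0 then x else oth s t x) = t := hLmem.resolve_left hL
    have hbx : word D (altFrom s t (h'+1) x) = word D (altFrom s t (h'+1) (oth s t x)) := by
      rcases hx with rfl | rfl
      · rw [oth_s]; exact hbraid
      · rw [oth_t _ _ hst]; exact hbraid.symm
    have hcan' : d = word D (altFrom s t (h'+1) (oth s t x)) := by rw [hcan, hbx]
    apply noend D s t hst d hds h' (oth s t x) (oth_mem s t x) hcan' hmeq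
    rcases Nat.even_or_odd h' with he | ho
    · have h0 : h' % 2 = 0 := Nat.even_iff.1 he
      have hxt : x = t := by simpa [h0] using hLt
      simp only [h0, reduceIte, if_true]
      rw [hxt, oth_t _ _ hst]
    · have h0 : h' % 2 = 1 := Nat.odd_iff.1 ho
      have hot : oth s t x = t := by simpa [h0] using hLt
      have hxs : x = s := by
        rcases hx with rfl | rfl
        · rfl
        · rw [oth_t _ _ hst] at hot; exact hot.symm
      simp only [h0, one_ne_zero, reduceIte]
      rw [oth_oth s t hst hx, hxs]

lemma pq_one (B C : ℝ) : pq B C 1 = (1, B) := by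
  have h1 : pq B C 1 = pq B C (0+1) := rfl
  rw [h1, pq_succ, pq_zero]
  norm_num

/-- the main dihedral lemma -/
lemma dihedral (hst : s ≠ t) (d : 𝔸 ≃ₗ[ℝ] 𝔸)
    (hd : ∃ l : List I, (∀ a ∈ l, a = s ∨ a = t) ∧ word D l = d)
    (hds : plen D (fun a => a = s ∨ a = t) d ≤ plen D (fun a => a = s ∨ a = t) (d * D.refl s)) :
    ∃ p q : ℝ, 0 ≤ p ∧ 0 ≤ q ∧ d (D.coroot s) = p • D.coroot s + q • D.coroot t := by
  obtain ⟨l, hP, hw, hlen⟩ := exists_reduced D hd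
  have hAst := D.offDiag s t hst
  have hAts := D.offDiag t s hst.symm
  by_cases hbig : 4 ≤ D.A s t * D.A t s
  · -- infinite dihedral case
    obtain ⟨m, x, hm, hx, hwcan⟩ := canonical D s t hst l hP
    have hd_can : d = word D (altFrom s t m x) := by rw [← hw, hwcan]
    have hple : plen D (fun a => a = s ∨ a = t) d ≤ m := by
      have := plen_le D (altFrom_mem s t hx m) hd_can.symm
      simpa using this
    have hmeq : m = plen D (fun a => a = s ∨ a = t) d := by omega
    have heval := dihedral_eval D s t hst d hds m x hx hd_can hmeq
    have hB : (0:ℝ) ≤ -((D.A s t : ℤ) : ℝ) := by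
      have : ((D.A s t : ℤ) : ℝ) ≤ 0 := by exact_mod_cast hAst
      linarith
    have hC : (0:ℝ) ≤ -((D.A t s : ℤ) : ℝ) := by
      have : ((D.A t s : ℤ) : ℝ) ≤ 0 := by exact_mod_cast hAts
      linarith
    have hBC : (4:ℝ) ≤ (-((D.A s t : ℤ) : ℝ)) * (-((D.A t s : ℤ) : ℝ)) := by
      have : ((4:ℤ) : ℝ) ≤ ((D.A s t * D.A t s : ℤ) : ℝ) := by exact_mod_cast hbig
      push_cast at this
      nlinarith [this]
    obtain ⟨hp1, hp2, _, _⟩ := pq_pos (-((D.A s t : ℤ) : ℝ)) (-((D.A t s : ℤ) : ℝ)) hB hC hBC m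
    exact ⟨_, _, hp1, hp2, heval⟩
  · -- finite dihedral cases
    have hu0 : 0 ≤ D.A s t * D.A t s := by nlinarith
    -- classify the possible values
    have hcases : (D.A s t = 0 ∧ D.A t s = 0) ∨ (D.A s t = -1 ∧ D.A t s = -1) ∨
        (D.A s t = -1 ∧ D.A t s = -2) ∨ (D.A s t = -2 ∧ D.A t s = -1) ∨
        (D.A s t = -1 ∧ D.A t s = -3) ∨ (D.A s t = -3 ∧ D.A t s = -1) := by
      by_cases hz : D.A s t = 0
      · exact Or.inl ⟨hz, (D.symmZero s t).1 hz⟩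
      · have hz' : D.A t s ≠ 0 := fun hh => hz ((D.symmZero t s).1 hh)
        have ha1 : D.A s t ≤ -1 := by omega
        have hb1 : D.A t s ≤ -1 := by omega
        have hub : D.A s t * D.A t s ≤ 3 := by omega
        have haL : -3 ≤ D.A s t := by nlinarith
        have hbL : -3 ≤ D.A t s := by nlinarith
        interval_cases ha : (D.A s t) <;> interval_cases hb : (D.A t s) <;> omega
    -- uniform finite-case finisher
    have finish : ∀ h : ℕ, 1 ≤ h →
        word D (altFrom s t h s) = word D (altFrom s t h t) →
        ∃ m, m < h ∧ d (D.coroot s) =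
          (pq (-((D.A s t : ℤ) : ℝ)) (-((D.A t s : ℤ) : ℝ)) m).1 • D.coroot s +
          (pq (-((D.A s t : ℤ) : ℝ)) (-((D.A t s : ℤ) : ℝ)) m).2 • D.coroot t := by
      intro h hh hbraid
      obtain ⟨m, x, hm, hmh, hx, hwcan⟩ :=
        canonical_bounded D s t hst hh hbraid l.length l le_rfl hP
      have hd_can : d = word D (altFrom s t m x) := by rw [← hw, hwcan]
      have hple : plen D (fun a => a = s ∨ a = t) d ≤ m := by
        have := plen_le D (altFrom_mem s t hx m) hd_can.symm
        simpa using this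
      have hmeq : m = plen D (fun a => a = s ∨ a = t) d := by omega
      have hmlt : m < h := by
        rcases lt_or_eq_of_le hmh with hlt | heq
        · exact hlt
        · exact absurd (dihedral_not_top D s t hst d hds hh hbraid x hx
            (heq ▸ hd_can) (by omega)) (fun hF => hF)
      exact ⟨m, hmlt, dihedral_eval D s t hst d hds m x hx hd_can hmeq⟩
    rcases hcases with ⟨ha, hb⟩ | ⟨ha, hb⟩ | ⟨ha, hb⟩ | ⟨ha, hb⟩ | ⟨ha, hb⟩ | ⟨ha, hb⟩
    · obtain ⟨m, hmlt, heval⟩ := finish 2 (by norm_num) (braid20 D s t hst ha hb)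
      have hBv : -((D.A s t : ℤ) : ℝ) = 0 := by rw [ha]; norm_num
      have hCv : -((D.A t s : ℤ) : ℝ) = 0 := by rw [hb]; norm_num
      rw [hBv, hCv] at heval
      refine ⟨_, _, ?_, ?_, heval⟩ <;>
        (interval_cases m <;>
          norm_num [pq_zero, pq_one])
    · obtain ⟨m, hmlt, heval⟩ := finish 3 (by norm_num) (braid31 D s t hst ha hb)
      have hBv : -((D.A s t : ℤ) : ℝ) = 1 := by rw [ha]; norm_num
      have hCv : -((D.A t s : ℤ) : ℝ) = 1 := by rw [hb]; norm_num
      rw [hBv, hCv] at heval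
      refine ⟨_, _, ?_, ?_, heval⟩ <;>
        (interval_cases m <;>
          norm_num [pq_zero, pq_one, show (2:ℕ) = 1+1 from rfl, pq_succ])
    · obtain ⟨m, hmlt, heval⟩ := finish 4 (by norm_num) (braid412 D s t hst ha hb)
      have hBv : -((D.A s t : ℤ) : ℝ) = 1 := by rw [ha]; norm_num
      have hCv : -((D.A t s : ℤ) : ℝ) = 2 := by rw [hb]; norm_num
      rw [hBv, hCv] at heval
      refine ⟨_, _, ?_, ?_, heval⟩ <;>
        (interval_cases m <;>
          norm_num [pq_zero, pq_one, show (3:ℕ) = 2+1 from rfl,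
            show (2:ℕ) = 1+1 from rfl, pq_succ])
    · obtain ⟨m, hmlt, heval⟩ := finish 4 (by norm_num) (braid421 D s t hst ha hb)
      have hBv : -((D.A s t : ℤ) : ℝ) = 2 := by rw [ha]; norm_num
      have hCv : -((D.A t s : ℤ) : ℝ) = 1 := by rw [hb]; norm_num
      rw [hBv, hCv] at heval
      refine ⟨_, _, ?_, ?_, heval⟩ <;>
        (interval_cases m <;>
          norm_num [pq_zero, pq_one, show (3:ℕ) = 2+1 from rfl,
            show (2:ℕ) = 1+1 from rfl, pq_succ])
    · obtain ⟨m, hmlt, heval⟩ := finish 6 (by norm_num) (braid613 D s t hst ha hb)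
      have hBv : -((D.A s t : ℤ) : ℝ) = 1 := by rw [ha]; norm_num
      have hCv : -((D.A t s : ℤ) : ℝ) = 3 := by rw [hb]; norm_num
      rw [hBv, hCv] at heval
      refine ⟨_, _, ?_, ?_, heval⟩ <;>
        (interval_cases m <;>
          norm_num [pq_zero, pq_one, show (5:ℕ) = 4+1 from rfl, show (4:ℕ) = 3+1 from rfl,
            show (3:ℕ) = 2+1 from rfl, show (2:ℕ) = 1+1 from rfl, pq_succ])
    · obtain ⟨m, hmlt, heval⟩ := finish 6 (by norm_num) (braid631 D s t hst ha hb)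
      have hBv : -((D.A s t : ℤ) : ℝ) = 3 := by rw [ha]; norm_num
      have hCv : -((D.A t s : ℤ) : ℝ) = 1 := by rw [hb]; norm_num
      rw [hBv, hCv] at heval
      refine ⟨_, _, ?_, ?_, heval⟩ <;>
        (interval_cases m <;>
          norm_num [pq_zero, pq_one, show (5:ℕ) = 4+1 from rfl, show (4:ℕ) = 3+1 from rfl,
            show (3:ℕ) = 2+1 from rfl, show (2:ℕ) = 1+1 from rfl, pq_succ])
end Dihedral

lemma refl_coroot_self (i : I) : D.refl i (D.coroot i) = -(D.coroot i) := by
  rw [D.refl_apply, root_coroot_self]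
  match_scalars <;> ring

/-- Main positivity theorem: if `ℓ(w rⱼ) ≥ ℓ(w)` then `w(αⱼ∨)` is a nonnegative
combination of simple coroots. -/
lemma posCoroot : ∀ n (w : 𝔸 ≃ₗ[ℝ] 𝔸), w ∈ D.weylGroup → flen D w = n → ∀ j : I,
    flen D w ≤ flen D (w * D.refl j) →
    ∃ c : I → ℝ, (∀ k, 0 ≤ c k) ∧ w (D.coroot j) = ∑ k, c k • D.coroot k := by
  intro n
  induction n using Nat.strong_induction_on with
  | _ n ih =>
    intro w hw hn j hj
    classical
    rcases Nat.eq_zero_or_pos n with h0 | hpos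
    · have hw1 : w = 1 := eq_one_of_flen_zero D hw (by omega)
      refine ⟨fun k => if k = j then 1 else 0, fun k => by dsimp only; split <;> norm_num, ?_⟩
      rw [hw1]
      rw [one_app]
      simp [ite_smul, Finset.sum_ite_eq']
    · obtain ⟨l, hwl, hlen⟩ := exists_freduced D hw
      have hlne : l ≠ [] := by
        intro hnil; rw [hnil] at hlen; simp at hlen; omega
      obtain ⟨l₀, k, rfl⟩ := (List.eq_nil_or_concat l).resolve_left hlne
      rw [List.concat_eq_append] at hwl hlen
      have hwRk : w * D.refl k = word D l₀ := by
        rw [← hwl, word_concat, mul_assoc, refl_mul_refl, mul_one]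
      have hk1 : flen D (w * D.refl k) ≤ l₀.length := flen_le D hwRk.symm
      have hlen0 : l₀.length + 1 = n := by
        rw [hn] at hlen
        simpa using hlen
      have hkj : j ≠ k := by
        intro hkj'; subst hkj'
        omega
      obtain ⟨v, c, hv, hcP, hwvc, hlen2, hvj, hvk⟩ := chain D j k n w hw hn
      have hcne : 1 ≤ c.length := by
        rcases Nat.eq_zero_or_pos c.length with hcz | hcp
        · exfalso
          rw [List.length_eq_zero_iff] at hcz
          subst hcz
          rw [word_nil, mul_one] at hwvc
          subst hwvc
          omega
        · exact hcp
      have hd2 : plen D (fun a => a = j ∨ a = k) (word D c) ≤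
          plen D (fun a => a = j ∨ a = k) (word D c * D.refl j) := by
        by_contra hcon
        push_neg at hcon
        have hple_c : plen D (fun a => a = j ∨ a = k) (word D c) ≤ c.length :=
          plen_le D hcP rfl
        obtain ⟨c', hc'P, hc'w, hc'len⟩ := exists_reduced D
          (g := word D c * D.refl j) ⟨c ++ [j], by
            intro a ha
            rcases List.mem_append.1 ha with ha | ha
            · exact hcP a ha
            · simp at ha; exact Or.inl ha, by rw [word_concat]⟩
        have hkey : w * D.refl j = v * word D c' := by
          rw [hwvc, mul_assoc, hc'w]
        have hkey2 : flen D (w * D.refl j) ≤ flen D v + c'.length := by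
          rw [hkey]; exact flen_mul_word_le D hv c'
        omega
      obtain ⟨p, q, hp, hq, hdc⟩ := dihedral D j k hkj (word D c) ⟨c, hcP, rfl⟩ hd2
      have hflv : flen D v < n := by omega
      obtain ⟨c₁, hc₁, hvj'⟩ := ih (flen D v) hflv v hv rfl j hvj
      obtain ⟨c₂, hc₂, hvk'⟩ := ih (flen D v) hflv v hv rfl k hvk
      refine ⟨fun k_ => p * c₁ k_ + q * c₂ k_,
        fun k_ => add_nonneg (mul_nonneg hp (hc₁ k_)) (mul_nonneg hq (hc₂ k_)), ?_⟩
      have hwveq : w (D.coroot j) = v ((word D c) (D.coroot j)) := by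
        rw [hwvc]; rfl
      rw [hwveq, hdc, map_add, map_smul, map_smul, hvj', hvk',
        Finset.smul_sum, Finset.smul_sum, ← Finset.sum_add_distrib]
      refine Finset.sum_congr rfl (fun k_ _ => ?_)
      rw [smul_smul, smul_smul, add_smul]

/-- If no `w(αⱼ∨)` is a nonpositive combination of coroots, then `w = 1`. -/
lemma eq_one_of_no_neg (w : 𝔸 ≃ₗ[ℝ] 𝔸) (hw : w ∈ D.weylGroup)
    (hno : ∀ (j : I) (c : I → ℝ), (∀ k, 0 ≤ c k) →
      w (D.coroot j) + ∑ k, c k • D.coroot k ≠ 0) : w = 1 := by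
  by_contra hne
  have hn : flen D w ≠ 0 := fun h0 => hne (eq_one_of_flen_zero D hw h0)
  obtain ⟨l, hwl, hlen⟩ := exists_freduced D hw
  have hlne : l ≠ [] := by
    intro hnil; rw [hnil] at hlen; simp at hlen; omega
  obtain ⟨l₀, k, rfl⟩ := (List.eq_nil_or_concat l).resolve_left hlne
  rw [List.concat_eq_append] at hwl hlen
  have hwRk : w * D.refl k = word D l₀ := by
    rw [← hwl, word_concat, mul_assoc, refl_mul_refl, mul_one]
  have hk1 : flen D (w * D.refl k) ≤ l₀.length := flen_le D hwRk.symm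
  have hlen0 : l₀.length + 1 = flen D w := by simpa using hlen
  have hcond : flen D (w * D.refl k) ≤ flen D ((w * D.refl k) * D.refl k) := by
    rw [mul_assoc, refl_mul_refl, mul_one]
    omega
  obtain ⟨c, hc0, hceq⟩ := posCoroot D (flen D (w * D.refl k)) (w * D.refl k)
    (mul_mem hw (refl_mem D k)) rfl k hcond
  have hwk : w (D.coroot k) = -((w * D.refl k) (D.coroot k)) := by
    have h1 : w (D.coroot k) = (w * D.refl k) (D.refl k (D.coroot k)) := by
      rw [mul_app]
      congr 1
      have := refl_mul_refl D k
      calc D.coroot k = (D.refl k * D.refl k) (D.coroot k) := by rw [this]; rfl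
        _ = D.refl k (D.refl k (D.coroot k)) := rfl
    rw [h1, refl_coroot_self, map_neg]
  exact hno k c hc0 (by rw [hwk, hceq]; simp)

lemma end_eq_one (w : 𝔸 ≃ₗ[ℝ] 𝔸) (hw : w ∈ D.weylGroup) (i : I)
    (hf : ∀ j, j ≠ i → ∃ c : ℝ, w (D.coroot j) = D.coroot j + c • D.coroot i)
    (hi : ∃ dp : ℝ, 0 < dp ∧ w (D.coroot i) = dp • D.coroot i) : w = 1 := by
  classical
  obtain ⟨dp, hdp, hwi⟩ := hi
  apply eq_one_of_no_neg D w hw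
  intro j c hc0 hzero
  have hLI := Fintype.linearIndependent_iff.1 D.corootInd
  by_cases hji : j = i
  · subst hji
    have hsum : ∑ k, ((if k = j then dp else 0) + c k) • D.coroot k = 0 := by
      have he : ∑ k, ((if k = j then dp else 0) + c k) • D.coroot k
          = dp • D.coroot j + ∑ k, c k • D.coroot k := by
        simp [add_smul, Finset.sum_add_distrib, ite_smul, Finset.sum_ite_eq']
      rw [he, ← hwi]
      exact hzero
    have hj0 := hLI _ hsum j
    simp at hj0
    have := hc0 j
    linarith
  · obtain ⟨e, hwj⟩ := hf j hji
    have hsum : ∑ k, ((if k = j then 1 else 0) + (if k = i then e else 0) + c k) •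
        D.coroot k = 0 := by
      have he : ∑ k, ((if k = j then 1 else 0) + (if k = i then e else 0) + c k) •
          D.coroot k = (D.coroot j + e • D.coroot i) + ∑ k, c k • D.coroot k := by
        simp [add_smul, Finset.sum_add_distrib, ite_smul, Finset.sum_ite_eq']
      rw [he, ← hwj]
      exact hzero
    have hj0 := hLI _ hsum j
    simp [hji] at hj0
    have := hc0 j
    linarith

end KMProof

/-- If `w` is an element of the Weyl group of a Kac–Moody root system such that
`w·λ − λ ∈ ℝ·αₛ∨` for all `λ` in a `W`-invariant lattice `Y` spanning `𝔸`, then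
`w = 1` or `w = s` (the simple reflection associated to `αₛ∨`). -/
theorem stmt8 (D : KMData I 𝔸) (Y : AddSubgroup 𝔸)
    (hspan : Submodule.span ℝ (Y : Set 𝔸) = ⊤)
    (hinv : ∀ g ∈ D.weylGroup, ∀ y ∈ Y, g y ∈ Y)
    (w : 𝔸 ≃ₗ[ℝ] 𝔸) (hw : w ∈ D.weylGroup) (i : I)
    (h : ∀ lam ∈ Y, ∃ c : ℝ, w lam - lam = c • D.coroot i) :
    w = 1 ∨ w = D.refl i := by
  classical
  -- every vector moves along the line `ℝ · coroot i`
  have key : ∀ v : 𝔸, ∃ c : ℝ, w v - v = c • D.coroot i := by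
    intro v
    have hle : (⊤ : Submodule ℝ 𝔸) ≤
        (Submodule.span ℝ {D.coroot i}).comap (w.toLinearMap - LinearMap.id) := by
      rw [← hspan]
      apply Submodule.span_le.2
      intro y hy
      obtain ⟨c, hc⟩ := h y hy
      simp only [SetLike.mem_coe, Submodule.mem_comap, LinearMap.sub_apply,
        LinearMap.id_apply, LinearEquiv.coe_coe]
      exact Submodule.mem_span_singleton.2 ⟨c, hc.symm⟩
    have hv := hle (Submodule.mem_top : v ∈ ⊤)
    simp only [Submodule.mem_comap, LinearMap.sub_apply, LinearMap.id_apply,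
      LinearEquiv.coe_coe] at hv
    obtain ⟨c, hc⟩ := Submodule.mem_span_singleton.1 hv
    exact ⟨c, hc.symm⟩
  obtain ⟨ci, hci⟩ := key (D.coroot i)
  have hwi : w (D.coroot i) = (1 + ci) • D.coroot i := by
    have := sub_eq_iff_eq_add.1 hci
    rw [this, add_smul, one_smul, add_comm]
  rcases lt_trichotomy 0 (1 + ci) with hpos | hzero | hneg
  · left
    apply KMProof.end_eq_one D w hw i
    · intro j _
      obtain ⟨cj, hcj⟩ := key (D.coroot j)
      exact ⟨cj, by rw [sub_eq_iff_eq_add.1 hcj, add_comm]⟩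
    · exact ⟨1 + ci, hpos, hwi⟩
  · exfalso
    have hzero' : w (D.coroot i) = 0 := by rw [hwi, ← hzero, zero_smul]
    have : D.coroot i = 0 := by
      apply w.injective
      rw [hzero', map_zero]
    exact D.corootInd.ne_zero i this
  · right
    have hw' : D.refl i * w ∈ D.weylGroup := mul_mem (KMProof.refl_mem D i) hw
    have h1 : D.refl i * w = 1 := by
      apply KMProof.end_eq_one D _ hw' i
      · intro j hji
        obtain ⟨cj, hcj⟩ := key (D.coroot j)
        have hwj : w (D.coroot j) = D.coroot j + cj • D.coroot i := by
          rw [sub_eq_iff_eq_add.1 hcj, add_comm]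
        refine ⟨-((D.A j i : ℤ) : ℝ) - cj, ?_⟩
        rw [KMProof.mul_app, hwj, D.refl_apply]
        simp only [map_add, map_smul, KMProof.pairing_cast, smul_eq_mul, D.diag]
        push_cast
        match_scalars <;> ring
      · refine ⟨-(1 + ci), by linarith, ?_⟩
        rw [KMProof.mul_app, hwi, map_smul, KMProof.refl_coroot_self]
        match_scalars <;> ring
    calc w = (D.refl i * D.refl i) * w := by rw [KMProof.refl_mul_refl, one_mul]
      _ = D.refl i * (D.refl i * w) := mul_assoc _ _ _
      _ = D.refl i * 1 := by rw [h1]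
      _ = D.refl i := mul_one _
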